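/- Let m ≥ 1 and R ≥ 1, and let the topology G be the complete bipartite graph with parts A and B, where |A| = m and |B| = R; let I be a set of m inhabitants with ι a bijection from I onto A, and let ub(h) = 0 for every h ∈ I. Then the unique housing of size R is π = B, it satisfies exc(π) = m·R, and for every t < m·R there is no t-relaxed inhabitants-respecting housing of size R. (Hence the bound t ≥ |I|·R guaranteeing existence of a t-relaxed inhabitants-respecting housing is tight.) -/
import Mathlib


/-- Tightness of the bound `t ≥ |I|·R`: in the complete
bipartite topology `K_{m,R}` with all `m ≥ 1` inhabitants on side `A` having
upper-bound `0` and `R ≥ 1` refugees, the unique housing of size `R` is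
`π = B`, its total excess is `m·R`, and for every `t < m·R` there is no
`t`-relaxed inhabitants-respecting housing of size `R`. -/
theorem relaxed_bound_tight
    (m R : ℕ) (hm : 1 ≤ m) (hR : 1 ≤ R)
    (G : SimpleGraph (Fin m ⊕ Fin R)) [DecidableRel G.Adj]
    (hadj : ∀ u v, G.Adj u v ↔
      ((∃ a, u = Sum.inl a) ∧ (∃ b, v = Sum.inr b)) ∨
      ((∃ b, u = Sum.inr b) ∧ (∃ a, v = Sum.inl a)))
    (ub : Fin m → ℕ) (hub : ∀ i, ub i = 0) :
    (∀ π : Finset (Fin m ⊕ Fin R),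
        (∀ v ∈ π, ∀ i : Fin m, v ≠ Sum.inl i) → π.card = R →
        π = Finset.univ.image (Sum.inr : Fin R → Fin m ⊕ Fin R)) ∧
    (∑ i : Fin m,
        (((Finset.univ.image (Sum.inr : Fin R → Fin m ⊕ Fin R)).filter
            (fun v => G.Adj (Sum.inl i) v)).card - ub i) = m * R) ∧
    (∀ t : ℕ, t < m * R →
      ¬ ∃ π : Finset (Fin m ⊕ Fin R),
          (∀ v ∈ π, ∀ i : Fin m, v ≠ Sum.inl i) ∧ π.card = R ∧
          ∑ i : Fin m,
              ((π.filter (fun v => G.Adj (Sum.inl i) v)).card - ub i) ≤ t) := by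
  have huniq : ∀ π : Finset (Fin m ⊕ Fin R),
      (∀ v ∈ π, ∀ i : Fin m, v ≠ Sum.inl i) → π.card = R →
      π = Finset.univ.image (Sum.inr : Fin R → Fin m ⊕ Fin R) := by
    intro π hne hcard
    have hsub : π ⊆ Finset.univ.image (Sum.inr : Fin R → Fin m ⊕ Fin R) := by
      intro v hv
      rcases v with a | b
      · exact absurd rfl (hne _ hv a)
      · exact Finset.mem_image.2 ⟨b, Finset.mem_univ _, rfl⟩
    apply Finset.eq_of_subset_of_card_le hsub
    rw [hcard, Finset.card_image_of_injective _ Sum.inr_injective, Finset.card_univ,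
      Fintype.card_fin]
  have hfilt : ∀ i : Fin m,
      ((Finset.univ.image (Sum.inr : Fin R → Fin m ⊕ Fin R)).filter
        (fun v => G.Adj (Sum.inl i) v)) = Finset.univ.image Sum.inr := by
    intro i
    apply Finset.filter_true_of_mem
    intro v hv
    rcases Finset.mem_image.1 hv with ⟨b, _, rfl⟩
    exact (hadj _ _).2 (Or.inl ⟨⟨i, rfl⟩, ⟨b, rfl⟩⟩)
  have hsum : (∑ i : Fin m,
      (((Finset.univ.image (Sum.inr : Fin R → Fin m ⊕ Fin R)).filter
          (fun v => G.Adj (Sum.inl i) v)).card - ub i) = m * R) := by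
    have : ∀ i : Fin m,
        (((Finset.univ.image (Sum.inr : Fin R → Fin m ⊕ Fin R)).filter
          (fun v => G.Adj (Sum.inl i) v)).card - ub i) = R := by
      intro i
      rw [hfilt i, hub i, Nat.sub_zero, Finset.card_image_of_injective _ Sum.inr_injective,
        Finset.card_univ, Fintype.card_fin]
    rw [Finset.sum_congr rfl fun i _ => this i, Finset.sum_const, Finset.card_univ,
      Fintype.card_fin, smul_eq_mul]
  refine ⟨huniq, hsum, ?_⟩
  rintro t ht ⟨π, hne, hcard, hle⟩
  rw [huniq π hne hcard] at hle
  rw [hsum] at hle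
  exact absurd (hle.trans_lt ht) (lt_irrefl _)
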